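/- Let (f_n) be a sequence of linear maps, f_n : A_n → Z, where (A_n) is an increasing chain of subspaces of a Banach space X with dense union and Z is a Banach space, such that each ‖f_n‖ ≤ 1, each f_n is an ε_n-isometry with ε_n → 0, and ‖f_{n+1}|_{A_n} − f_n‖ ≤ δ_n with Σ δ_n < ∞. Then there is a unique continuous linear map f : X → Z with ‖f‖ ≤ 1 such that f|_{A_m} = lim_{n→∞} f_n|_{A_m} for every m, and if moreover Σ_{k≥n} δ_k + ε_n → 0, then f is an isometric embedding. -/

import Mathlib

open Filter Topology

set_option maxHeartbeats 1000000 in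
/-- a Cauchy chain of 1-bounded ε_n-isometries on a dense chain
of subspaces has a unique 1-bounded pointwise limit F : X → Z; if moreover the
tail errors Σ_{k≥n} δ_k + ε_n tend to 0, then F is an isometric embedding. -/
theorem stmt_18 {X Z : Type*} [NormedAddCommGroup X] [NormedSpace ℝ X]
    [CompleteSpace X] [NormedAddCommGroup Z] [NormedSpace ℝ Z] [CompleteSpace Z]
    (ε δ : ℕ → ℝ) (hεpos : ∀ n, 0 ≤ ε n) (hδpos : ∀ n, 0 ≤ δ n)
    (hε0 : Tendsto ε atTop (𝓝 0)) (hδsum : Summable δ)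
    (A : ℕ → Submodule ℝ X) (hA : Monotone A)
    (hAdense : Dense (⋃ n, (A n : Set X)))
    (f : ∀ n, A n →ₗ[ℝ] Z)
    (hfnorm : ∀ n (a : A n), ‖f n a‖ ≤ ‖a‖)
    (hfiso : ∀ n (a : A n), (1 - ε n) * ‖a‖ ≤ ‖f n a‖)
    (hfstep : ∀ n (a : A n),
      ‖f (n + 1) (Submodule.inclusion (hA (Nat.le_succ n)) a) - f n a‖ ≤ δ n * ‖a‖) :
    ∃ F : X →L[ℝ] Z,
      (∀ x : X, ‖F x‖ ≤ ‖x‖) ∧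
      (∀ m (a : A m),
        Tendsto (fun k : ℕ =>
            f (m + k) (Submodule.inclusion (hA (Nat.le_add_right m k)) a))
          atTop (𝓝 (F (a : X)))) ∧
      (∀ G : X →L[ℝ] Z, (∀ x : X, ‖G x‖ ≤ ‖x‖) →
        (∀ m (a : A m),
          Tendsto (fun k : ℕ =>
              f (m + k) (Submodule.inclusion (hA (Nat.le_add_right m k)) a))
            atTop (𝓝 (G (a : X)))) → G = F) ∧
      (Tendsto (fun n => (∑' k, δ (n + k)) + ε n) atTop (𝓝 0) →
        ∀ x : X, ‖F x‖ = ‖x‖) := by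
  classical
  -- the "eventually defined" sequence of approximations at a point
  set u : ℕ → X → Z := fun j x => if h : x ∈ A j then f j ⟨x, h⟩ else 0 with hu
  have hux : ∀ (j : ℕ) (x : X) (h : x ∈ A j), u j x = f j ⟨x, h⟩ := by
    intro j x h; simp [hu, h]
  -- step estimate
  have hstep : ∀ (n : ℕ) (x : X), x ∈ A n → ‖u (n + 1) x - u n x‖ ≤ δ n * ‖x‖ := by
    intro n x h
    have h' : x ∈ A (n + 1) := hA (Nat.le_succ n) h
    rw [hux (n + 1) x h', hux n x h]
    have := hfstep n ⟨x, h⟩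
    have hinc : Submodule.inclusion (hA (Nat.le_succ n)) (⟨x, h⟩ : A n) = ⟨x, h'⟩ := rfl
    rw [hinc] at this
    simpa using this
  -- telescoping estimate
  have htel : ∀ (n N : ℕ) (x : X), x ∈ A n → n ≤ N →
      ‖u N x - u n x‖ ≤ (∑ j ∈ Finset.Ico n N, δ j) * ‖x‖ := by
    intro n N x hx hnN
    induction N, hnN using Nat.le_induction with
    | base => simp
    | succ N hnN ih =>
      have hxN : x ∈ A N := hA hnN hx
      calc ‖u (N + 1) x - u n x‖
          ≤ ‖u (N + 1) x - u N x‖ + ‖u N x - u n x‖ := norm_sub_le_norm_sub_add_norm_sub _ _ _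
        _ ≤ δ N * ‖x‖ + (∑ j ∈ Finset.Ico n N, δ j) * ‖x‖ :=
            add_le_add (hstep N x hxN) ih
        _ = (∑ j ∈ Finset.Ico n (N + 1), δ j) * ‖x‖ := by
            rw [Finset.sum_Ico_succ_top hnN, add_mul]; ring
  -- tail sums
  have hδtail : ∀ n, Summable fun k => δ (n + k) := by
    intro n
    exact ((summable_nat_add_iff n).2 hδsum).congr (fun k => by rw [Nat.add_comm])
  have hIco_le : ∀ (n N : ℕ), (∑ j ∈ Finset.Ico n N, δ j) ≤ ∑' k, δ (n + k) := by
    intro n N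
    rw [Finset.sum_Ico_eq_sum_range]
    exact Summable.sum_le_tsum (Finset.range (N - n)) (fun k _ => hδpos _) (hδtail n)
  have htail : ∀ (n N : ℕ) (x : X), x ∈ A n → n ≤ N →
      ‖u N x - u n x‖ ≤ (∑' k, δ (n + k)) * ‖x‖ := by
    intro n N x hx hnN
    exact (htel n N x hx hnN).trans (mul_le_mul_of_nonneg_right (hIco_le n N) (norm_nonneg x))
  -- convergence of the sequence on the union
  have hconv : ∀ (m : ℕ) (x : X), x ∈ A m →
      Tendsto (fun j => u j x) atTop (𝓝 (limUnder atTop fun j => u j x)) := by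
    intro m x hx
    have hc : CauchySeq fun j => u (j + m) x := by
      apply cauchySeq_of_summable_dist
      have hsum : Summable fun j => δ (j + m) * ‖x‖ :=
        ((summable_nat_add_iff m).2 hδsum).mul_right _
      refine Summable.of_nonneg_of_le (fun j => dist_nonneg) (fun j => ?_) hsum
      rw [dist_eq_norm, norm_sub_rev]
      have hxj : x ∈ A (j + m) := hA (Nat.le_add_left m j) hx
      have hh := hstep (j + m) x hxj
      simpa [show j + 1 + m = j + m + 1 from by ring] using hh
    obtain ⟨z, hz⟩ := cauchySeq_tendsto_of_complete hc
    have hz' : Tendsto (fun j => u j x) atTop (𝓝 z) := (tendsto_add_atTop_iff_nat m).1 hz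
    rwa [hz'.limUnder_eq]
  -- the supremum submodule and its coercion
  set S : Submodule ℝ X := ⨆ n, A n with hS
  have hScoe : (S : Set X) = ⋃ n, (A n : Set X) :=
    Submodule.coe_iSup_of_directed A hA.directed_le
  have hmemS : ∀ (m : ℕ) (x : X), x ∈ A m → x ∈ S := by
    intro m x hx
    exact Submodule.mem_iSup_of_mem m hx
  have hmemU : ∀ s : S, ∃ m, (s : X) ∈ A m := by
    intro s
    have : (s : X) ∈ (S : Set X) := s.2
    rw [hScoe] at this
    simpa using this
  -- the linear map on S
  have key : ∀ s : S, ∃ m, (s : X) ∈ A m := hmemU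
  set Φ : S →ₗ[ℝ] Z :=
    { toFun := fun s => limUnder atTop fun j => u j (s : X)
      map_add' := by
        intro s t
        obtain ⟨ms, hms⟩ := hmemU s
        obtain ⟨mt, hmt⟩ := hmemU t
        have hms' : (s : X) ∈ A (max ms mt) := hA (le_max_left _ _) hms
        have hmt' : (t : X) ∈ A (max ms mt) := hA (le_max_right _ _) hmt
        have hst : ((s + t : S) : X) ∈ A (max ms mt) := by
          simpa using (A (max ms mt)).add_mem hms' hmt'
        have h1 := hconv _ _ hst
        have h2 := (hconv _ _ hms').add (hconv _ _ hmt')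
        have heq : ∀ᶠ j in atTop, u j ((s : X) + (t : X)) = u j (s : X) + u j (t : X) := by
          filter_upwards [eventually_ge_atTop (max ms mt)] with j hj
          have h1 : (s : X) ∈ A j := hA hj hms'
          have h2 : (t : X) ∈ A j := hA hj hmt'
          have h3 : (s : X) + (t : X) ∈ A j := (A j).add_mem h1 h2
          rw [hux j _ h3, hux j _ h1, hux j _ h2, ← map_add]
          rfl
        have h2' : Tendsto (fun j => u j ((s + t : S) : X)) atTop
            (𝓝 ((limUnder atTop fun j => u j (s : X)) + limUnder atTop fun j => u j (t : X))) := by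
          refine Tendsto.congr' ?_ h2
          filter_upwards [heq] with j hj
          simpa using hj.symm
        exact tendsto_nhds_unique h1 h2'
      map_smul' := by
        intro c s
        obtain ⟨ms, hms⟩ := hmemU s
        have hcs : ((c • s : S) : X) ∈ A ms := by
          simpa using (A ms).smul_mem c hms
        have h1 := hconv _ _ hcs
        have h2 := (hconv _ _ hms).const_smul c
        have h2' : Tendsto (fun j => u j ((c • s : S) : X)) atTop
            (𝓝 (c • limUnder atTop fun j => u j (s : X))) := by
          refine Tendsto.congr' ?_ h2
          filter_upwards [eventually_ge_atTop ms] with j hj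
          have h1 : (s : X) ∈ A j := hA hj hms
          have h3 : c • (s : X) ∈ A j := (A j).smul_mem c h1
          have : u j (c • (s : X)) = c • u j (s : X) := by
            rw [hux j _ h3, hux j _ h1, ← map_smul]
            rfl
          simpa using this.symm
        exact tendsto_nhds_unique h1 h2' } with hΦ
  have hΦval : ∀ s : S, Φ s = limUnder atTop fun j => u j (s : X) := fun s => rfl
  have hΦconv : ∀ s : S, Tendsto (fun j => u j (s : X)) atTop (𝓝 (Φ s)) := by
    intro s
    obtain ⟨m, hm⟩ := hmemU s
    exact hconv m _ hm
  have hΦnorm : ∀ s : S, ‖Φ s‖ ≤ ‖(s : X)‖ := by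
    intro s
    obtain ⟨m, hm⟩ := hmemU s
    refine le_of_tendsto (hΦconv s).norm ?_
    filter_upwards [eventually_ge_atTop m] with j hj
    have h1 : (s : X) ∈ A j := hA hj hm
    rw [hux j _ h1]
    simpa using hfnorm j ⟨(s : X), h1⟩
  -- extend to X
  set Φc : S →L[ℝ] Z := Φ.mkContinuous 1 (fun s => by simpa using hΦnorm s) with hΦc
  have hdr : DenseRange (S.subtypeL : S →L[ℝ] X) := by
    have : Set.range ((S.subtypeL : S →L[ℝ] X)) = (S : Set X) := Subtype.range_coe
    rw [DenseRange, this, hScoe]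
    exact hAdense
  have hui : IsUniformInducing (S.subtypeL : S →L[ℝ] X) :=
    isUniformEmbedding_subtype_val.isUniformInducing
  set F : X →L[ℝ] Z := Φc.extend S.subtypeL with hF
  have hFs : ∀ s : S, F (s : X) = Φ s := by
    intro s
    have := ContinuousLinearMap.extend_eq (f := Φc) (e := S.subtypeL) hdr hui s
    simpa [hF, hΦc] using this
  -- norm bound on the union, then everywhere
  have hFU : ∀ x ∈ ⋃ n, (A n : Set X), ‖F x‖ ≤ ‖x‖ := by
    intro x hx
    rw [Set.mem_iUnion] at hx
    obtain ⟨m, hm⟩ := hx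
    have hxS : x ∈ S := hmemS m x hm
    rw [show x = ((⟨x, hxS⟩ : S) : X) from rfl, hFs]
    exact hΦnorm _
  have hFnorm : ∀ x : X, ‖F x‖ ≤ ‖x‖ := by
    intro x
    have hclosed : IsClosed {x : X | ‖F x‖ ≤ ‖x‖} :=
      isClosed_le F.continuous.norm continuous_norm
    have := hclosed.closure_subset_iff.2 hFU
    rw [hAdense.closure_eq] at this
    exact this (Set.mem_univ x)
  -- the tendsto property
  have hseq : ∀ (m : ℕ) (a : A m),
      (fun k : ℕ => f (m + k) (Submodule.inclusion (hA (Nat.le_add_right m k)) a))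
        = fun k : ℕ => u (m + k) (a : X) := by
    intro m a
    funext k
    have hmk : (a : X) ∈ A (m + k) := hA (Nat.le_add_right m k) a.2
    rw [hux (m + k) _ hmk]
    rfl
  have htend : ∀ (m : ℕ) (a : A m),
      Tendsto (fun k : ℕ =>
          f (m + k) (Submodule.inclusion (hA (Nat.le_add_right m k)) a))
        atTop (𝓝 (F (a : X))) := by
    intro m a
    rw [hseq m a]
    have hxS : (a : X) ∈ S := hmemS m _ a.2
    have h1 : Tendsto (fun j => u j (a : X)) atTop (𝓝 (F (a : X))) := by
      rw [show (a : X) = ((⟨(a : X), hxS⟩ : S) : X) from rfl, hFs]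
      exact hΦconv _
    have h2 : Tendsto (fun k : ℕ => u (k + m) (a : X)) atTop (𝓝 (F (a : X))) :=
      (tendsto_add_atTop_iff_nat m).2 h1
    refine h2.congr (fun k => by rw [Nat.add_comm])
  refine ⟨F, hFnorm, htend, ?_, ?_⟩
  · -- uniqueness
    intro G hGnorm hGtend
    have hEq : Set.EqOn (⇑G) (⇑F) (⋃ n, (A n : Set X)) := by
      intro x hx
      rw [Set.mem_iUnion] at hx
      obtain ⟨m, hm⟩ := hx
      exact tendsto_nhds_unique (hGtend m ⟨x, hm⟩) (htend m ⟨x, hm⟩)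
    have := Continuous.ext_on hAdense G.continuous F.continuous hEq
    exact ContinuousLinearMap.coeFn_injective this
  · -- isometry
    intro htails x
    have hlower : ∀ x ∈ ⋃ n, (A n : Set X), ‖x‖ ≤ ‖F x‖ := by
      intro x hx
      rw [Set.mem_iUnion] at hx
      obtain ⟨m, hm⟩ := hx
      have hxS : x ∈ S := hmemS m x hm
      have hFx : Tendsto (fun j => u j x) atTop (𝓝 (F x)) := by
        rw [show x = ((⟨x, hxS⟩ : S) : X) from rfl, hFs]
        exact hΦconv _
      -- for n ≥ m : ‖F x‖ ≥ ‖x‖ - ((∑' k, δ (n+k)) + ε n) * ‖x‖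
      have hge : ∀ n ≥ m, ‖x‖ - ((∑' k, δ (n + k)) + ε n) * ‖x‖ ≤ ‖F x‖ := by
        intro n hn
        have hxn : x ∈ A n := hA hn hm
        have hdiff : ‖F x - u n x‖ ≤ (∑' k, δ (n + k)) * ‖x‖ := by
          have h1 : Tendsto (fun N => u N x - u n x) atTop (𝓝 (F x - u n x)) :=
            hFx.sub tendsto_const_nhds
          refine le_of_tendsto h1.norm ?_
          filter_upwards [eventually_ge_atTop n] with N hN
          exact htail n N x hxn hN
        have hiso : (1 - ε n) * ‖x‖ ≤ ‖u n x‖ := by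
          rw [hux n x hxn]
          simpa using hfiso n ⟨x, hxn⟩
        have htri : ‖u n x‖ - ‖F x - u n x‖ ≤ ‖F x‖ := by
          have := norm_sub_norm_le (F x) (u n x)
          have h2 : ‖u n x‖ - ‖F x‖ ≤ ‖F x - u n x‖ := by
            have := norm_sub_norm_le (u n x) (F x)
            rwa [norm_sub_rev] at this
          linarith
        nlinarith [norm_nonneg x]
      have hlim : Tendsto (fun n => ‖x‖ - ((∑' k, δ (n + k)) + ε n) * ‖x‖) atTop
          (𝓝 ‖x‖) := by
        have := (htails.mul_const ‖x‖)
        have h2 : Tendsto (fun n => ‖x‖ - ((∑' k, δ (n + k)) + ε n) * ‖x‖) atTop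
            (𝓝 (‖x‖ - 0 * ‖x‖)) := tendsto_const_nhds.sub this
        simpa using h2
      exact le_of_tendsto hlim (eventually_atTop.2 ⟨m, hge⟩)
    have hclosed : IsClosed {x : X | ‖F x‖ = ‖x‖} :=
      isClosed_eq F.continuous.norm continuous_norm
    have hsub : (⋃ n, (A n : Set X)) ⊆ {x : X | ‖F x‖ = ‖x‖} := by
      intro y hy
      exact le_antisymm (hFnorm y) (hlower y hy)
    have := hclosed.closure_subset_iff.2 hsub
    rw [hAdense.closure_eq] at this
    exact this (Set.mem_univ x)
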